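/- Let X be a random variable taking values in [−V, V] such that E[exp(−ηX)] ≤ 1 for some η > 0. Then E[X²] ≤ 4(η⁻¹ + V)·E[X]. -/

import Mathlib

open MeasureTheory


lemma aux_hfun (z : ℝ) (hz : 0 ≤ z) :
    z ^ 2 / 2 ≤ (1 + z) * (Real.exp (-z) - 1 + z) := by
  set h : ℝ → ℝ := fun t => (1 + t) * (Real.exp (-t) - 1 + t) - t ^ 2 / 2 with hh
  have hderiv : ∀ t : ℝ, HasDerivAt h (t * (1 - Real.exp (-t))) t := by
    intro t
    have he : HasDerivAt (fun t : ℝ => Real.exp (-t)) (-Real.exp (-t)) t := by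
      convert (hasDerivAt_neg t).exp using 1; ring
    have h1 : HasDerivAt (fun t : ℝ => 1 + t) 1 t := by
      simpa using (hasDerivAt_id t).const_add (1 : ℝ)
    have h2 : HasDerivAt (fun t : ℝ => Real.exp (-t) - 1 + t) (-Real.exp (-t) + 1) t := by
      exact (he.sub_const 1).add (hasDerivAt_id' t)
    have h3 := h1.mul h2
    have h4 : HasDerivAt (fun t : ℝ => t ^ 2 / 2) t t := by
      simpa using (hasDerivAt_pow 2 t).div_const 2
    have := h3.sub h4
    exact this.congr_deriv (by ring)
  have hmono : MonotoneOn h (Set.Ici (0 : ℝ)) := by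
    apply monotoneOn_of_deriv_nonneg (convex_Ici 0)
    · exact (Continuous.continuousOn (by continuity))
    · intro t ht
      exact (hderiv t).differentiableAt.differentiableWithinAt
    · intro t ht
      rw [interior_Ici] at ht
      rw [(hderiv t).deriv]
      have h1 : Real.exp (-t) ≤ 1 := by
        rw [Real.exp_le_one_iff]; linarith [(Set.mem_Ioi.mp ht).le]
      have := (Set.mem_Ioi.mp ht).le
      nlinarith
  have h0 : h 0 = 0 := by simp [hh]
  have := hmono (Set.self_mem_Ici) hz hz
  rw [h0] at this
  simp only [hh] at this
  linarith

lemma aux_pointwise (a z : ℝ) (ha : 0 ≤ a) (hza : z ≤ a) :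
    1 - z + z ^ 2 / (4 * (1 + a)) ≤ Real.exp (-z) := by
  have ha1 : (0:ℝ) < 1 + a := by linarith
  have h4 : (0:ℝ) < 4 * (1 + a) := by linarith
  rcases le_or_gt z 0 with hz | hz
  · -- exp(-z) ≥ (1 - z/2)^2 = 1 - z + z²/4 ≥ 1 - z + z²/(4(1+a))
    have h1 : -z / 2 + 1 ≤ Real.exp (-z / 2) := Real.add_one_le_exp _
    have h2 : (1 - z / 2) ^ 2 ≤ Real.exp (-z) := by
      have hpos : (0:ℝ) ≤ 1 - z / 2 := by linarith
      have : Real.exp (-z) = Real.exp (-z / 2) ^ 2 := by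
        rw [← Real.exp_nat_mul]; push_cast; ring_nf
      rw [this]
      have := Real.exp_pos (-z / 2)
      nlinarith
    have h3 : z ^ 2 / (4 * (1 + a)) ≤ z ^ 2 / 4 := by
      apply div_le_div_of_nonneg_left (sq_nonneg z) (by norm_num) (by linarith)
    nlinarith
  · have key := aux_hfun z hz.le
    have hE : -z + 1 ≤ Real.exp (-z) := Real.add_one_le_exp _
    rw [← sub_nonneg]
    have expand : Real.exp (-z) - (1 - z + z ^ 2 / (4 * (1 + a)))
        = (Real.exp (-z) - 1 + z) - z ^ 2 / (4 * (1 + a)) := by ring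
    rw [expand, sub_nonneg, div_le_iff₀ h4]
    -- need z² ≤ (exp(-z)-1+z) * (4(1+a))
    have hnn : 0 ≤ Real.exp (-z) - 1 + z := by linarith
    nlinarith [mul_nonneg hnn (by linarith : (0:ℝ) ≤ 1 + 2*a - z)]

/-- Central-to-Bernstein (Mehta): if `X ∈ [−V, V]` and `E[exp(−ηX)] ≤ 1` for some `η > 0`,
then `E[X²] ≤ 4(η⁻¹ + V)·E[X]`. -/
theorem central_to_bernstein {Ω : Type*} [MeasurableSpace Ω] (μ : Measure Ω)
    [IsProbabilityMeasure μ] (X : Ω → ℝ) (hX : Measurable X) (V η : ℝ)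
    (hV : 0 < V) (hη : 0 < η) (hb : ∀ ω, X ω ∈ Set.Icc (-V) V)
    (hmgf : (∫ ω, Real.exp (-η * X ω) ∂μ) ≤ 1) :
    (∫ ω, X ω ^ 2 ∂μ) ≤ 4 * (η⁻¹ + V) * ∫ ω, X ω ∂μ := by
  have ha : (0:ℝ) ≤ η * V := by positivity
  have ha1 : (0:ℝ) < 1 + η * V := by linarith
  set c : ℝ := η ^ 2 / (4 * (1 + η * V)) with hc
  have hcpos : 0 < c := by positivity
  -- pointwise bound
  have hpt : ∀ ω, 1 - η * X ω + c * X ω ^ 2 ≤ Real.exp (-η * X ω) := by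
    intro ω
    have hz : η * X ω ≤ η * V := by
      have := (hb ω).2
      exact mul_le_mul_of_nonneg_left this hη.le
    have := aux_pointwise (η * V) (η * X ω) ha hz
    have heq : -(η * X ω) = -η * X ω := by ring
    rw [heq] at this
    have heq2 : (η * X ω) ^ 2 / (4 * (1 + η * V)) = c * X ω ^ 2 := by
      rw [hc]; field_simp
    rw [heq2] at this
    exact this
  -- integrability
  have hbd : ∀ ω, |X ω| ≤ V := fun ω => abs_le.mpr ⟨(hb ω).1, (hb ω).2⟩
  have hXi : Integrable X μ := by
    apply Integrable.mono' (integrable_const V) hX.aestronglyMeasurable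
    exact ae_of_all μ fun ω => by simpa using hbd ω
  have hX2i : Integrable (fun ω => X ω ^ 2) μ := by
    apply Integrable.mono' (integrable_const (V ^ 2)) (hX.pow_const 2).aestronglyMeasurable
    refine ae_of_all μ fun ω => ?_
    rw [Real.norm_eq_abs, abs_pow]
    exact pow_le_pow_left₀ (abs_nonneg _) (hbd ω) 2
  have hEi : Integrable (fun ω => Real.exp (-η * X ω)) μ := by
    apply Integrable.mono' (integrable_const (Real.exp (η * V)))
      ((Real.measurable_exp.comp ((measurable_const.mul hX))).aestronglyMeasurable)
    refine ae_of_all μ fun ω => ?_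
    simp only [Function.comp_apply, Pi.mul_apply]
    rw [Real.norm_eq_abs, abs_of_pos (Real.exp_pos _), Real.exp_le_exp]
    have h1 : -V ≤ X ω := (hb ω).1
    nlinarith
  -- integrate the pointwise bound
  have hLi : Integrable (fun ω => 1 - η * X ω + c * X ω ^ 2) μ := by
    exact ((integrable_const (1:ℝ)).sub (hXi.const_mul η)).add (hX2i.const_mul c)
  have h1i : Integrable (fun ω => 1 - η * X ω) μ := (integrable_const (1:ℝ)).sub (hXi.const_mul η)
  have hint : (∫ ω, (1 - η * X ω + c * X ω ^ 2) ∂μ) ≤ ∫ ω, Real.exp (-η * X ω) ∂μ :=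
    integral_mono hLi hEi hpt
  have hsplit : (∫ ω, (1 - η * X ω + c * X ω ^ 2) ∂μ)
      = 1 - η * (∫ ω, X ω ∂μ) + c * ∫ ω, X ω ^ 2 ∂μ := by
    rw [integral_add h1i (hX2i.const_mul c),
      integral_sub (integrable_const (1:ℝ)) (hXi.const_mul η),
      MeasureTheory.integral_const_mul, MeasureTheory.integral_const_mul]
    simp [measure_univ]
  rw [hsplit] at hint
  have hmain : c * (∫ ω, X ω ^ 2 ∂μ) ≤ η * ∫ ω, X ω ∂μ := by linarith
  have hfinal : (∫ ω, X ω ^ 2 ∂μ) ≤ (η * ∫ ω, X ω ∂μ) / c :=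
    (le_div_iff₀ hcpos).mpr (by linarith [hmain, mul_comm (∫ ω, X ω ^ 2 ∂μ) c])
  have : (η * ∫ ω, X ω ∂μ) / c = 4 * (η⁻¹ + V) * ∫ ω, X ω ∂μ := by
    rw [hc]; field_simp
  linarith [hfinal, this.symm.le, this ▸ hfinal]
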